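/- Let k be an integrable Mercer kernel on ℤ≥0 with RKHS H, assume every element of H is absolutely summable, let u : ℤ → ℝ be a bounded function, and let τ ∈ ℤ≥0. Then the function φ : ℤ≥0 → ℝ defined by φ(t) = Σ_{s∈ℤ≥0} k(t,s) u(τ − s) belongs to H, and for every g ∈ H the convolution functional satisfies L_u^τ(g) := Σ_{s∈ℤ≥0} g(s) u(τ − s) = ⟨φ, g⟩_H. In particular, the linear functional L_u^τ : H → ℝ is continuous (bounded). -/

import Mathlib

open scoped InnerProductSpace ENNReal

set_option maxHeartbeats 1000000 in
/-- For an integrable Mercer kernel `k` on `ℤ≥0` with RKHS `H` whose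
elements are all absolutely summable, a bounded `u : ℤ → ℝ` and `τ ∈ ℤ≥0`, the
function `φ(t) = ∑_{s∈ℤ≥0} k(t,s) u(τ-s)` belongs to `H`, represents the convolution
functional `L_u^τ(g) = ∑_{s∈ℤ≥0} g(s) u(τ-s)`, and in particular `L_u^τ` is a
bounded (continuous) linear functional on `H`. -/
theorem stmt_9
    {H : Type*} [NormedAddCommGroup H] [InnerProductSpace ℝ H] [CompleteSpace H]
    (k : ℕ → ℕ → ℝ)
    (hsymm : ∀ s t, k s t = k t s)
    (hpsd : ∀ (n : ℕ) (t : Fin n → ℕ) (a : Fin n → ℝ),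
      0 ≤ ∑ i, ∑ j, a i * a j * k (t i) (t j))
    (hint : Summable fun p : ℕ × ℕ => |k p.1 p.2|)
    (ι : H →ₗ[ℝ] (ℕ → ℝ)) (hι : Function.Injective ι)
    (K : ℕ → H) (hK : ∀ t s, ι (K t) s = k t s)
    (hrep : ∀ (g : H) (t : ℕ), ⟪g, K t⟫_ℝ = ι g t)
    (hl1 : ∀ g : H, Summable fun t => |ι g t|)
    (u : ℤ → ℝ) (hu : ∃ C, ∀ s, |u s| ≤ C)
    (τ : ℕ) :
    ∃ φ : H,
      (∀ t : ℕ, ι φ t = ∑' s : ℕ, k t s * u (τ - s)) ∧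
      (∀ g : H, ∑' s : ℕ, ι g s * u (τ - s) = ⟪φ, g⟫_ℝ) ∧
      ∃ C : ℝ, ∀ g : H, |∑' s : ℕ, ι g s * u (τ - s)| ≤ C * ‖g‖ := by
  classical
  obtain ⟨C₀, hC₀⟩ := hu
  set M : ℝ := max C₀ 0 with hMdef
  have hM : ∀ s, |u s| ≤ M := fun s => (hC₀ s).trans (le_max_left _ _)
  have hM0 : (0:ℝ) ≤ M := le_max_right _ _
  -- summability of the convolution series, in absolute value
  have hsumabs : ∀ g : H, Summable fun s : ℕ => |ι g s * u (τ - s)| := by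
    intro g
    refine Summable.of_nonneg_of_le (fun s => abs_nonneg _) (fun s => ?_)
      ((hl1 g).mul_right M)
    rw [abs_mul]
    exact mul_le_mul_of_nonneg_left (hM _) (abs_nonneg _)
  have hsum : ∀ g : H, Summable fun s : ℕ => ι g s * u (τ - s) :=
    fun g => (hsumabs g).of_abs
  -- membership in ℓ¹
  haveI : Fact ((1:ℝ≥0∞) ≤ 1) := ⟨le_refl _⟩
  have hmem : ∀ g : H, Memℓp (ι g) (1 : ℝ≥0∞) := by
    intro g
    refine memℓp_gen ?_
    simpa [Real.rpow_one] using hl1 g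
  -- linear map into ℓ¹
  let T : H →ₗ[ℝ] lp (fun _ : ℕ => ℝ) 1 :=
    { toFun := fun g => ⟨ι g, hmem g⟩
      map_add' := fun a b => by
        ext s
        simp
        rfl
      map_smul' := fun c a => by
        ext s
        simp }
  have hTapp : ∀ (g : H) (s : ℕ), (T g : ℕ → ℝ) s = ι g s := fun g s => rfl
  -- coordinate functionals are continuous on H
  have hcoord : ∀ (s : ℕ), Continuous fun g : H => ι g s := by
    intro s
    have : (fun g : H => ι g s) = fun g : H => ⟪g, K s⟫_ℝ := by
      funext g; exact (hrep g s).symm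
    rw [this]
    exact Continuous.inner continuous_id continuous_const
  -- closed graph theorem gives continuity of T
  have hTcont : Continuous T := by
    refine T.continuous_of_seq_closed_graph ?_
    intro v x y hv hTv
    ext s
    have h1 : Filter.Tendsto (fun n => (T (v n) : ℕ → ℝ) s) Filter.atTop (nhds (y.1 s)) := by
      have hnorm : Filter.Tendsto (fun n => ‖T (v n) - y‖) Filter.atTop (nhds 0) := by
        rw [← tendsto_iff_norm_sub_tendsto_zero]
        exact hTv
      have hle : ∀ n, ‖(T (v n) : ℕ → ℝ) s - y.1 s‖ ≤ ‖T (v n) - y‖ := by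
        intro n
        have := lp.norm_apply_le_norm (one_ne_zero) (T (v n) - y) s
        simpa using this
      have : Filter.Tendsto (fun n => ‖(T (v n) : ℕ → ℝ) s - y.1 s‖)
          Filter.atTop (nhds 0) :=
        squeeze_zero (fun n => norm_nonneg _) hle hnorm
      exact tendsto_iff_norm_sub_tendsto_zero.2 this
    have h2 : Filter.Tendsto (fun n => ι (v n) s) Filter.atTop (nhds (ι x s)) :=
      ((hcoord s).tendsto x).comp hv
    have h2' : Filter.Tendsto (fun n => (T (v n) : ℕ → ℝ) s) Filter.atTop (nhds (ι x s)) := h2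
    exact tendsto_nhds_unique h1 h2'
  let Tc : H →L[ℝ] lp (fun _ : ℕ => ℝ) 1 := ⟨T, hTcont⟩
  -- the ℓ¹ norm computes the sum of absolute values
  have hnormT : ∀ g : H, (∑' s : ℕ, |ι g s|) = ‖T g‖ := by
    intro g
    rw [lp.norm_eq_tsum_rpow (by norm_num) (T g)]
    simp [Real.rpow_one, hTapp, Real.norm_eq_abs]
  -- the key bound
  have hbound : ∀ g : H, |∑' s : ℕ, ι g s * u (τ - s)| ≤ (M * ‖Tc‖) * ‖g‖ := by
    intro g
    calc |∑' s : ℕ, ι g s * u (τ - s)| ≤ ∑' s : ℕ, |ι g s * u (τ - s)| := by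
          have h := norm_tsum_le_tsum_norm (f := fun s : ℕ => ι g s * u (τ - s))
            (by simpa only [Real.norm_eq_abs] using hsumabs g)
          simpa only [Real.norm_eq_abs] using h
      _ ≤ ∑' s : ℕ, |ι g s| * M := by
          refine Summable.tsum_le_tsum (fun s => ?_) (hsumabs g) ((hl1 g).mul_right M)
          rw [abs_mul]
          exact mul_le_mul_of_nonneg_left (hM _) (abs_nonneg _)
      _ = (∑' s : ℕ, |ι g s|) * M := tsum_mul_right
      _ = ‖T g‖ * M := by rw [hnormT]
      _ = ‖Tc g‖ * M := rfl
      _ ≤ (‖Tc‖ * ‖g‖) * M := mul_le_mul_of_nonneg_right (Tc.le_opNorm g) hM0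
      _ = (M * ‖Tc‖) * ‖g‖ := by ring
  -- the convolution functional as a continuous linear map
  let L₀ : H →ₗ[ℝ] ℝ :=
    { toFun := fun g => ∑' s : ℕ, ι g s * u (τ - s)
      map_add' := fun a b => by
        have : ∀ s : ℕ, ι (a + b) s * u (τ - s)
            = ι a s * u (τ - s) + ι b s * u (τ - s) := by
          intro s
          rw [map_add]
          simp [add_mul]
        show (∑' s : ℕ, ι (a + b) s * u (τ - s)) = _
        rw [tsum_congr this, Summable.tsum_add (hsum a) (hsum b)]
      map_smul' := fun c a => by
        have : ∀ s : ℕ, ι (c • a) s * u (τ - s) = c * (ι a s * u (τ - s)) := by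
          intro s
          rw [map_smul]
          simp [mul_assoc]
        show (∑' s : ℕ, ι (c • a) s * u (τ - s)) = _
        rw [tsum_congr this, tsum_mul_left]
        rfl }
  let L : H →L[ℝ] ℝ := L₀.mkContinuous (M * ‖Tc‖) (by
    intro g
    rw [Real.norm_eq_abs]; exact hbound g)
  refine ⟨(InnerProductSpace.toDual ℝ H).symm L, ?_, ?_, ⟨M * ‖Tc‖, hbound⟩⟩
  · intro t
    have h1 : ι ((InnerProductSpace.toDual ℝ H).symm L) t
        = ⟪(InnerProductSpace.toDual ℝ H).symm L, K t⟫_ℝ := (hrep _ t).symm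
    rw [h1, InnerProductSpace.toDual_symm_apply]
    show ∑' s : ℕ, ι (K t) s * u (τ - s) = _
    exact tsum_congr fun s => by rw [hK]
  · intro g
    rw [InnerProductSpace.toDual_symm_apply]
    rfl
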